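/- Let B be a nondegenerate ε-symmetric K-bilinear form on V, and let L be a lattice with dual lattice L' = {x ∈ V : B(x,y) ∈ R for all y ∈ L}. Then the dual of the lattice m₋(L,L') is m₊(L,L'), and m₋(L,L') is almost self-dual, i.e., π·(m₋(L,L'))' ⊆ m₋(L,L') ⊆ (m₋(L,L'))'. -/

import Mathlib

open scoped Pointwise

variable {R K V : Type*} [CommRing R] [IsDomain R] [IsDiscreteValuationRing R]
  [Field K] [Algebra R K] [IsFractionRing R K]
  [AddCommGroup V] [Module K V] [Module R V] [IsScalarTower R K V]
  [FiniteDimensional K V]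

/-- A lattice in `V` is a finitely generated `R`-submodule spanning `V` over `K`. -/
def IsLattice (K : Type*) [Field K] [Algebra R K] [Module K V] (L : Submodule R V) : Prop :=
  L.FG ∧ Submodule.span K (L : Set V) = ⊤

/-- `πⁿ L`, for `n ∈ ℤ` (via the embedding of `π` in `K`). -/
noncomputable def latTwist (π : R) (n : ℤ) (L : Submodule R V) : Submodule R V :=
  ((algebraMap R K π) ^ n) • L

/-- The lower middle `m₋(L,M) = ∑ₙ (πⁿL ∩ π⁻ⁿM)`. -/
noncomputable def lowerMiddle (π : R) (L M : Submodule R V) : Submodule R V :=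
  ⨆ n : ℤ, (latTwist (K := K) π n L ⊓ latTwist (K := K) π (-n) M)

/-- The upper middle `m₊(L,M) = ⋂ₙ (πⁿL + π⁻ⁿM)`. -/
noncomputable def upperMiddle (π : R) (L M : Submodule R V) : Submodule R V :=
  ⨅ n : ℤ, (latTwist (K := K) π n L ⊔ latTwist (K := K) π (-n) M)

/-- The dual lattice `L' = {x ∈ V : B(x,y) ∈ R for all y ∈ L}`. -/
def dualLattice (B : V →ₗ[K] V →ₗ[K] K) (L : Submodule R V) : Submodule R V where
  carrier := {x | ∀ y ∈ L, B x y ∈ (algebraMap R K).range}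
  add_mem' := by
    intro a b ha hb y hy
    rw [map_add, LinearMap.add_apply]
    exact add_mem (ha y hy) (hb y hy)
  zero_mem' := by
    intro y hy
    rw [map_zero, LinearMap.zero_apply]
    exact zero_mem _
  smul_mem' := by
    intro r x hx y hy
    rw [← algebraMap_smul K r x, map_smul, LinearMap.smul_apply, smul_eq_mul]
    obtain ⟨s, hs⟩ := hx y hy
    exact ⟨r * s, by rw [map_mul, hs]⟩

set_option linter.unusedSectionVars false
set_option linter.unusedVariables false

section AuxA

variable {π : R}

lemma aux_c_ne_zero (hπ : Irreducible π) : (algebraMap R K π) ≠ 0 := by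
  simpa using (map_ne_zero_iff _ (IsFractionRing.injective R K)).mpr hπ.ne_zero

lemma mem_latTwist (hπ : Irreducible π) {n : ℤ} {L : Submodule R V} {x : V} :
    x ∈ latTwist (K := K) π n L ↔ ((algebraMap R K π) ^ (-n)) • x ∈ L := by
  rw [zpow_neg]
  show x ∈ ((algebraMap R K π) ^ n) • (L : Set V) ↔ _
  exact Set.mem_smul_set_iff_inv_smul_mem₀ (zpow_ne_zero _ (aux_c_ne_zero hπ)) _ _

lemma smul_mem_latTwist (hπ : Irreducible π) {n : ℤ} {L : Submodule R V} {x : V}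
    (hx : x ∈ L) : ((algebraMap R K π) ^ n) • x ∈ latTwist (K := K) π n L :=
  Submodule.smul_mem_pointwise_smul x _ L hx

lemma latTwist_mono_exp (hπ : Irreducible π) {m n : ℤ} (h : m ≤ n) (L : Submodule R V) :
    latTwist (K := K) π n L ≤ latTwist (K := K) π m L := by
  intro x hx
  rw [mem_latTwist hπ] at hx ⊢
  have key : ((algebraMap R K π) ^ (-m)) • x
      = ((algebraMap R K π) ^ ((n - m).toNat : ℤ)) • (((algebraMap R K π) ^ (-n)) • x) := by
    rw [smul_smul, ← zpow_add₀ (aux_c_ne_zero hπ)]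
    rw [Int.toNat_of_nonneg (by omega : (0:ℤ) ≤ n - m)]
    ring
  rw [key, zpow_natCast, ← map_pow, algebraMap_smul]
  exact L.smul_mem _ hx

lemma latTwist_smul (hπ : Irreducible π) (n : ℤ) (L : Submodule R V) :
    (algebraMap R K π) • latTwist (K := K) π n L = latTwist (K := K) π (n + 1) L := by
  show (algebraMap R K π) • ((algebraMap R K π) ^ n • L) = _
  rw [smul_smul, latTwist]
  congr 1
  rw [zpow_add₀ (aux_c_ne_zero hπ), zpow_one, mul_comm]

lemma latTwist_mono (n : ℤ) {L M : Submodule R V} (h : L ≤ M) :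
    latTwist (K := K) π n L ≤ latTwist (K := K) π n M :=
  Submodule.map_mono h

end AuxA
section AuxC

variable {π : R} {B : V →ₗ[K] V →ₗ[K] K} {ε : K}

lemma mem_dualLattice {L : Submodule R V} {x : V} :
    x ∈ dualLattice B L ↔ ∀ y ∈ L, B x y ∈ (algebraMap R K).range := Iff.rfl

lemma dualLattice_antitone {L M : Submodule R V} (h : L ≤ M) :
    dualLattice B M ≤ dualLattice B L := fun x hx y hy => hx y (h hy)

lemma eps_mul_mem (hε : ε = 1 ∨ ε = -1) {a : K} (ha : a ∈ (algebraMap R K).range) :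
    ε * a ∈ (algebraMap R K).range := by
  obtain ⟨r, rfl⟩ := ha
  rcases hε with rfl | rfl
  · exact ⟨r, by simp⟩
  · exact ⟨-r, by simp⟩

lemma aux_Bsmul1 (c : K) (x y : V) : B (c • x) y = c * B x y := by simp

lemma aux_Bsmul2 (c : K) (x y : V) : B x (c • y) = c * B x y := by simp

lemma dualLattice_latTwist (hπ : Irreducible π) (n : ℤ) (L : Submodule R V) :
    dualLattice B (latTwist (K := K) π n L) = latTwist (K := K) π (-n) (dualLattice B L) := by
  ext x
  rw [mem_latTwist hπ, neg_neg, mem_dualLattice, mem_dualLattice]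
  constructor
  · intro h y hy
    rw [aux_Bsmul1]
    have := h _ (smul_mem_latTwist hπ (n := n) hy)
    rwa [aux_Bsmul2] at this
  · intro h y hy
    rw [mem_latTwist hπ] at hy
    have := h _ hy
    rwa [aux_Bsmul1, aux_Bsmul2, ← mul_assoc, ← zpow_add₀ (aux_c_ne_zero hπ),
      add_neg_cancel, zpow_zero, one_mul] at this

lemma le_dualLattice_dualLattice (hε : ε = 1 ∨ ε = -1)
    (hsymm : ∀ x y : V, B x y = ε * B y x) (L : Submodule R V) :
    L ≤ dualLattice B (dualLattice B L) := by
  intro x hx y hy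
  rw [hsymm]
  exact eps_mul_mem hε (hy x hx)

end AuxC
section AuxD

variable {π : R} {B : V →ₗ[K] V →ₗ[K] K} {ε : K}

include K in
lemma aux_noZeroSMulDivisors : NoZeroSMulDivisors R V := by
  constructor
  intro r x h
  by_cases hr : r = 0
  · exact Or.inl hr
  · right
    have : (algebraMap R K r) • x = 0 := by rwa [algebraMap_smul]
    rcases smul_eq_zero.mp this with h' | h'
    · exact absurd h' ((map_ne_zero_iff _ (IsFractionRing.injective R K)).mpr hr)
    · exact h'

lemma aux_span_span {s : Set V} :
    Submodule.span K ((Submodule.span R s : Submodule R V) : Set V) = Submodule.span K s := by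
  apply le_antisymm
  · rw [Submodule.span_le]
    intro x hx
    exact Submodule.span_le_restrictScalars R K s hx
  · exact Submodule.span_mono Submodule.subset_span

lemma exists_latticeBasis {L : Submodule R V} (hL : IsLattice K L) :
    ∃ (n : ℕ) (b : Module.Basis (Fin n) K V), L = Submodule.span R (Set.range ⇑b) := by
  haveI := aux_noZeroSMulDivisors (R := R) (K := K) (V := V)
  haveI : Module.Finite R L := Module.Finite.iff_fg.mpr hL.1
  haveI : Module.Free R L := Module.free_of_finite_type_torsion_free'
  let b0 : Module.Basis (Fin (Fintype.card (Module.Free.ChooseBasisIndex R L))) R L :=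
    (Module.Free.chooseBasis R L).reindex (Fintype.equivFin _)
  let v : Fin _ → V := fun i => (b0 i : V)
  have hli : LinearIndependent R v := b0.linearIndependent.map' L.subtype L.ker_subtype
  have hliK : LinearIndependent K v := (LinearIndependent.iff_fractionRing R K).mp hli
  have hspanR : Submodule.span R (Set.range v) = L := by
    have : Set.range v = L.subtype '' Set.range ⇑b0 := by
      rw [← Set.range_comp]; rfl
    rw [this, ← Submodule.map_span, b0.span_eq, Submodule.map_subtype_top]
  have hspanK : ⊤ ≤ Submodule.span K (Set.range v) := by
    have h3 := aux_span_span (R := R) (K := K) (s := Set.range v)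
    rw [hspanR] at h3
    rw [← h3, hL.2]
  exact ⟨_, Module.Basis.mk hliK hspanK, by rw [Module.Basis.coe_mk, hspanR]⟩

lemma aux_span_range_isLattice {ι : Type*} [Fintype ι] (b : Module.Basis ι K V) :
    IsLattice K (Submodule.span R (Set.range ⇑b)) := by
  refine ⟨Submodule.fg_span (Set.finite_range _), ?_⟩
  rw [aux_span_span, b.span_eq]

lemma dualLattice_eq_dualSubmodule (L : Submodule R V) :
    dualLattice B L = LinearMap.BilinForm.dualSubmodule B L := by
  ext x
  simp only [mem_dualLattice, LinearMap.BilinForm.mem_dualSubmodule, Submodule.mem_one,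
    RingHom.mem_range]

lemma isLattice_dualLattice (hnd : LinearMap.BilinForm.Nondegenerate B) {L : Submodule R V}
    (hL : IsLattice K L) : IsLattice K (dualLattice B L) := by
  classical
  obtain ⟨n, b, rfl⟩ := exists_latticeBasis hL
  rw [dualLattice_eq_dualSubmodule, LinearMap.BilinForm.dualSubmodule_span_of_basis B hnd b]
  exact aux_span_range_isLattice _

lemma aux_flip_dualSubmodule (hε : ε = 1 ∨ ε = -1)
    (hsymm : ∀ x y : V, B x y = ε * B y x) (N : Submodule R V) :
    LinearMap.BilinForm.dualSubmodule B.flip N = LinearMap.BilinForm.dualSubmodule B N := by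
  have hmem : ∀ a : K, a ∈ (1 : Submodule R K) → ε * a ∈ (1 : Submodule R K) := by
    intro a ha
    obtain ⟨r, hr⟩ := Submodule.mem_one.mp ha
    rcases hε with rfl | rfl
    · exact Submodule.mem_one.mpr ⟨r, by rw [hr, one_mul]⟩
    · exact Submodule.mem_one.mpr ⟨-r, by rw [map_neg, hr]; ring⟩
  ext x
  simp only [LinearMap.BilinForm.mem_dualSubmodule, LinearMap.flip_apply]
  constructor
  · intro h y hy
    have := hmem _ (h y hy)
    rwa [← hsymm] at this
  · intro h y hy
    rw [hsymm y x]
    exact hmem _ (h y hy)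

lemma dualLattice_dualLattice (hnd : LinearMap.BilinForm.Nondegenerate B) (hε : ε = 1 ∨ ε = -1)
    (hsymm : ∀ x y : V, B x y = ε * B y x) {L : Submodule R V} (hL : IsLattice K L) :
    dualLattice B (dualLattice B L) = L := by
  obtain ⟨n, b, rfl⟩ := exists_latticeBasis hL
  rw [dualLattice_eq_dualSubmodule, dualLattice_eq_dualSubmodule,
    ← aux_flip_dualSubmodule hε hsymm (Submodule.span R (Set.range ⇑b))]
  exact LinearMap.BilinForm.dualSubmodule_dualSubmodule_flip_of_basis B hnd b

end AuxD
section AuxE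

variable {π : R} {B : V →ₗ[K] V →ₗ[K] K}

lemma aux_clear_denom (hπ : Irreducible π) (c : K) :
    ∃ (k : ℕ) (r : R), ((algebraMap R K π) ^ k) * c = algebraMap R K r := by
  obtain ⟨a, b, hb, hc⟩ := IsFractionRing.div_surjective (A := R) c
  have hb0 : b ≠ 0 := nonZeroDivisors.ne_zero hb
  obtain ⟨k, u, hu⟩ := IsDiscreteValuationRing.eq_unit_mul_pow_irreducible hb0 hπ
  refine ⟨k, a * ↑u⁻¹, ?_⟩
  have hbK : algebraMap R K b ≠ 0 :=
    (map_ne_zero_iff _ (IsFractionRing.injective R K)).mpr hb0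
  have huK : algebraMap R K (↑u : R) ≠ 0 :=
    (map_ne_zero_iff _ (IsFractionRing.injective R K)).mpr (Units.ne_zero u)
  have hb' : algebraMap R K b = algebraMap R K (↑u : R) * (algebraMap R K π) ^ k := by
    rw [hu, map_mul, map_pow]
  have huu : algebraMap R K (↑u : R) * algebraMap R K (↑u⁻¹ : R) = 1 := by
    rw [← map_mul]
    simp
  have key : (algebraMap R K π) ^ k * c * algebraMap R K (↑u : R) = algebraMap R K a := by
    rw [← hc, hb']
    have hπK := aux_c_ne_zero (K := K) hπ
    field_simp
  rw [map_mul, ← key, mul_assoc, huu, mul_one]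

lemma exists_pow_smul_mem (hπ : Irreducible π) {N : Submodule R V}
    (hN : Submodule.span K (N : Set V) = ⊤) (x : V) :
    ∃ k : ℕ, (π ^ k) • x ∈ N := by
  have hx : x ∈ Submodule.span K (N : Set V) := by rw [hN]; trivial
  induction hx using Submodule.span_induction with
  | mem y hy => exact ⟨0, by simpa using hy⟩
  | zero => exact ⟨0, by simp⟩
  | add y z _ _ hy hz =>
    obtain ⟨ky, hky⟩ := hy
    obtain ⟨kz, hkz⟩ := hz
    refine ⟨ky + kz, ?_⟩
    rw [smul_add]
    refine N.add_mem ?_ ?_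
    · rw [add_comm, pow_add, mul_smul]
      exact N.smul_mem _ hky
    · rw [pow_add, mul_smul]
      exact N.smul_mem _ hkz
  | smul c y _ hy =>
    obtain ⟨k, hk⟩ := hy
    obtain ⟨j, r, hjr⟩ := aux_clear_denom hπ c
    refine ⟨j + k, ?_⟩
    have : (π ^ (j + k)) • (c • y) = r • ((π ^ k) • y) := by
      rw [← algebraMap_smul K (π ^ (j + k)), ← algebraMap_smul K r, ← algebraMap_smul K (π ^ k) y,
        smul_smul, smul_smul]
      congr 1
      rw [map_pow, map_pow, pow_add, mul_assoc, mul_comm ((algebraMap R K π) ^ k) c,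
        ← mul_assoc, hjr]
    rw [this]
    exact N.smul_mem _ hk

lemma mem_latTwist_neg_natCast (hπ : Irreducible π) {N : Submodule R V} {x : V} {k : ℕ}
    (h : (π ^ k) • x ∈ N) : x ∈ latTwist (K := K) π (-(k : ℤ)) N := by
  rw [mem_latTwist hπ, neg_neg, zpow_natCast, ← map_pow, algebraMap_smul]
  exact h

lemma isLattice_latTwist (hπ : Irreducible π) {L : Submodule R V} (hL : IsLattice K L)
    (n : ℤ) : IsLattice K (latTwist (K := K) π n L) := by
  constructor
  · exact Submodule.FG.map _ hL.1
  · have h1 : (latTwist (K := K) π n L : Set V) = ((algebraMap R K π) ^ n) • (L : Set V) := rfl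
    rw [h1, Submodule.span_smul, hL.2]
    ext x
    simp only [Submodule.mem_top, iff_true]
    have : x = ((algebraMap R K π) ^ n) • (((algebraMap R K π) ^ n)⁻¹ • x) := by
      rw [smul_smul, mul_inv_cancel₀ (zpow_ne_zero _ (aux_c_ne_zero hπ)), one_smul]
    rw [this]
    exact Submodule.smul_mem_pointwise_smul _ _ _ trivial

lemma isLattice_sup {L M : Submodule R V} (hL : IsLattice K L) (hM : IsLattice K M) :
    IsLattice K (L ⊔ M) := by
  refine ⟨Submodule.FG.sup hL.1 hM.1, ?_⟩
  rw [eq_top_iff, ← hL.2]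
  exact Submodule.span_mono (fun x hx => Submodule.mem_sup_left hx)

end AuxE
section AuxF

variable {π : R} {B : V →ₗ[K] V →ₗ[K] K} {ε : K}

lemma aux_core (hπ : Irreducible π) {L : Submodule R V} {n m : ℤ} (hnm : n ≤ m)
    {x y : V} (hx : x ∈ latTwist (K := K) π (-n) (dualLattice B L))
    (hy : y ∈ latTwist (K := K) π m L) :
    B x y ∈ (algebraMap R K).range := by
  rw [mem_latTwist hπ, neg_neg] at hx
  rw [mem_latTwist hπ] at hy
  have h := hx _ hy
  rw [aux_Bsmul1, aux_Bsmul2, ← mul_assoc, ← zpow_add₀ (aux_c_ne_zero hπ)] at h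
  have key : B x y = (algebraMap R K (π ^ (m - n).toNat)) *
      ((algebraMap R K π) ^ (n + -m) * B x y) := by
    rw [map_pow, ← mul_assoc, ← zpow_natCast, ← zpow_add₀ (aux_c_ne_zero hπ),
      Int.toNat_of_nonneg (by omega : (0:ℤ) ≤ m - n)]
    have : m - n + (n + -m) = 0 := by ring
    rw [this, zpow_zero, one_mul]
  obtain ⟨r, hr⟩ := h
  rw [key, ← hr, ← map_mul]
  exact ⟨_, rfl⟩

lemma aux_comp_comp (hπ : Irreducible π) (hε : ε = 1 ∨ ε = -1)
    (hsymm : ∀ x y : V, B x y = ε * B y x) {L : Submodule R V} {n m : ℤ} {x y : V}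
    (hx : x ∈ latTwist (K := K) π n L ⊓ latTwist (K := K) π (-n) (dualLattice B L))
    (hy : y ∈ latTwist (K := K) π m L ⊓ latTwist (K := K) π (-m) (dualLattice B L)) :
    B x y ∈ (algebraMap R K).range := by
  rcases le_total n m with h | h
  · exact aux_core hπ h hx.2 hy.1
  · rw [hsymm]
    exact eps_mul_mem hε (aux_core hπ h hy.2 hx.1)

lemma aux_lower_le_dual (hπ : Irreducible π) (hε : ε = 1 ∨ ε = -1)
    (hsymm : ∀ x y : V, B x y = ε * B y x) (L : Submodule R V) :
    lowerMiddle (K := K) π L (dualLattice B L) ≤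
      dualLattice B (lowerMiddle (K := K) π L (dualLattice B L)) := by
  intro x hx
  rw [mem_dualLattice]
  have main : ∀ z, z ∈ lowerMiddle (K := K) π L (dualLattice B L) →
      ∀ w, w ∈ lowerMiddle (K := K) π L (dualLattice B L) → B z w ∈ (algebraMap R K).range := by
    intro z hz
    refine Submodule.iSup_induction
      (motive := fun z => ∀ w, w ∈ lowerMiddle (K := K) π L (dualLattice B L) →
        B z w ∈ (algebraMap R K).range) _ hz ?_ ?_ ?_
    · intro n z1 hz1 w hw
      refine Submodule.iSup_induction
        (motive := fun w => B z1 w ∈ (algebraMap R K).range) _ hw ?_ ?_ ?_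
      · intro m w1 hw1
        exact aux_comp_comp hπ hε hsymm hz1 hw1
      · simp
      · intro w1 w2 h1 h2
        rw [map_add]
        exact add_mem h1 h2
    · intro w hw
      simp
    · intro z1 z2 h1 h2 w hw
      rw [map_add, LinearMap.add_apply]
      exact add_mem (h1 w hw) (h2 w hw)
  exact main x hx

lemma aux_upper_le_dual (hπ : Irreducible π) (hε : ε = 1 ∨ ε = -1)
    (hsymm : ∀ x y : V, B x y = ε * B y x) (L : Submodule R V) :
    upperMiddle (K := K) π L (dualLattice B L) ≤
      dualLattice B (lowerMiddle (K := K) π L (dualLattice B L)) := by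
  intro x hx
  rw [mem_dualLattice]
  intro y hy
  refine Submodule.iSup_induction
    (motive := fun y => B x y ∈ (algebraMap R K).range) _ hy ?_ ?_ ?_
  · intro n y1 hy1
    have hxn : x ∈ latTwist (K := K) π n L ⊔ latTwist (K := K) π (-n) (dualLattice B L) :=
      (Submodule.mem_iInf _).mp hx n
    obtain ⟨a, ha, b, hb, hab⟩ := Submodule.mem_sup.mp hxn
    have h1 : B a y1 ∈ (algebraMap R K).range := by
      rw [hsymm]
      exact eps_mul_mem hε (aux_core hπ le_rfl hy1.2 ha)
    have h2 : B b y1 ∈ (algebraMap R K).range := aux_core hπ le_rfl hb hy1.1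
    rw [← hab, map_add, LinearMap.add_apply]
    exact add_mem h1 h2
  · simp
  · intro y1 y2 h1 h2
    rw [map_add]
    exact add_mem h1 h2

lemma aux_dual_le_upper (hπ : Irreducible π) (hnd : LinearMap.BilinForm.Nondegenerate B)
    (hε : ε = 1 ∨ ε = -1) (hsymm : ∀ x y : V, B x y = ε * B y x)
    {L : Submodule R V} (hL : IsLattice K L) :
    dualLattice B (lowerMiddle (K := K) π L (dualLattice B L)) ≤
      upperMiddle (K := K) π L (dualLattice B L) := by
  rw [upperMiddle]
  refine le_iInf fun n => ?_
  have hD : IsLattice K (dualLattice B L) := isLattice_dualLattice hnd hL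
  have hN : IsLattice K (latTwist (K := K) π n L ⊔
      latTwist (K := K) π (-n) (dualLattice B L)) :=
    isLattice_sup (isLattice_latTwist hπ hL n) (isLattice_latTwist hπ hD (-n))
  have h1 : dualLattice B (lowerMiddle (K := K) π L (dualLattice B L)) ≤
      dualLattice B (latTwist (K := K) π n L ⊓ latTwist (K := K) π (-n) (dualLattice B L)) :=
    dualLattice_antitone (le_iSup (fun n => latTwist (K := K) π n L ⊓
      latTwist (K := K) π (-n) (dualLattice B L)) n)
  have h2 : dualLattice B (latTwist (K := K) π n L ⊔
      latTwist (K := K) π (-n) (dualLattice B L)) ≤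
      latTwist (K := K) π n L ⊓ latTwist (K := K) π (-n) (dualLattice B L) := by
    refine le_inf ?_ ?_
    · have h := dualLattice_antitone (B := B)
        (le_sup_right (a := latTwist (K := K) π n L)
          (b := latTwist (K := K) π (-n) (dualLattice B L)))
      rwa [dualLattice_latTwist hπ, neg_neg, dualLattice_dualLattice hnd hε hsymm hL] at h
    · have h := dualLattice_antitone (B := B)
        (le_sup_left (a := latTwist (K := K) π n L)
          (b := latTwist (K := K) π (-n) (dualLattice B L)))
      rwa [dualLattice_latTwist hπ] at h
  have h3 := dualLattice_antitone (B := B) h2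
  rw [dualLattice_dualLattice hnd hε hsymm hN] at h3
  exact h1.trans h3

end AuxF
section AuxG

variable {π : R} {B : V →ₗ[K] V →ₗ[K] K} {ε : K}

lemma aux_smul_latTwist_mem (hπ : Irreducible π) {k : ℤ} {M : Submodule R V} {z : V}
    (hz : z ∈ latTwist (K := K) π k M) :
    (algebraMap R K π) • z ∈ latTwist (K := K) π (k + 1) M := by
  rw [← latTwist_smul hπ k M]
  exact Submodule.smul_mem_pointwise_smul _ _ _ hz

lemma aux_smul_upper_mem_lower (hπ : Irreducible π)
    (hnd : LinearMap.BilinForm.Nondegenerate B)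
    {L : Submodule R V} (hL : IsLattice K L) {x : V}
    (hx : x ∈ upperMiddle (K := K) π L (dualLattice B L)) :
    (algebraMap R K π) • x ∈ lowerMiddle (K := K) π L (dualLattice B L) := by
  have hD : IsLattice K (dualLattice B L) := isLattice_dualLattice hnd hL
  obtain ⟨k₁, hk₁⟩ := exists_pow_smul_mem hπ hL.2 x
  obtain ⟨k₂, hk₂⟩ := exists_pow_smul_mem hπ hD.2 x
  have hcomp : ∀ N : ℤ, latTwist (K := K) π N L ⊓ latTwist (K := K) π (-N) (dualLattice B L) ≤
      lowerMiddle (K := K) π L (dualLattice B L) := fun N =>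
    le_iSup (fun n => latTwist (K := K) π n L ⊓ latTwist (K := K) π (-n) (dualLattice B L)) N
  have base : ∃ a, a ∈ latTwist (K := K) π (-(k₁ : ℤ)) L ∧
      x - a ∈ latTwist (K := K) π (-(-(k₁ : ℤ))) (dualLattice B L) ∧
      (algebraMap R K π) • (x - a) ∈ lowerMiddle (K := K) π L (dualLattice B L) :=
    ⟨x, mem_latTwist_neg_natCast hπ hk₁, by simp, by simp⟩
  have step : ∀ N : ℤ, -(k₁ : ℤ) ≤ N →
      (∃ a, a ∈ latTwist (K := K) π N L ∧
        x - a ∈ latTwist (K := K) π (-N) (dualLattice B L) ∧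
        (algebraMap R K π) • (x - a) ∈ lowerMiddle (K := K) π L (dualLattice B L)) →
      (∃ a, a ∈ latTwist (K := K) π (N + 1) L ∧
        x - a ∈ latTwist (K := K) π (-(N + 1)) (dualLattice B L) ∧
        (algebraMap R K π) • (x - a) ∈ lowerMiddle (K := K) π L (dualLattice B L)) := by
    intro N hN ih
    obtain ⟨a, ha1, ha2, ha3⟩ := ih
    have hxN : x ∈ latTwist (K := K) π (N + 1) L ⊔
        latTwist (K := K) π (-(N + 1)) (dualLattice B L) :=
      (Submodule.mem_iInf _).mp hx (N + 1)
    obtain ⟨a', ha', b', hb', hab⟩ := Submodule.mem_sup.mp hxN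
    have hxa' : x - a' = b' := by rw [← hab]; abel
    refine ⟨a', ha', by rw [hxa']; exact hb', ?_⟩
    have hsplit : (algebraMap R K π) • (x - a') =
        (algebraMap R K π) • (x - a) + (algebraMap R K π) • (a - a') := by
      rw [← smul_add]
      congr 1
      abel
    rw [hsplit]
    refine Submodule.add_mem _ ha3 ?_
    have hd1 : a - a' ∈ latTwist (K := K) π N L :=
      Submodule.sub_mem _ ha1 (latTwist_mono_exp hπ (by omega) L ha')
    have hd2 : a - a' ∈ latTwist (K := K) π (-(N + 1)) (dualLattice B L) := by
      have h1 : x - a' ∈ latTwist (K := K) π (-(N + 1)) (dualLattice B L) := by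
        rw [hxa']; exact hb'
      have h2 : x - a ∈ latTwist (K := K) π (-(N + 1)) (dualLattice B L) :=
        latTwist_mono_exp hπ (by omega) _ ha2
      have h3 := Submodule.sub_mem _ h1 h2
      have heq : (x - a') - (x - a) = a - a' := by abel
      rwa [heq] at h3
    refine hcomp (N + 1) ⟨aux_smul_latTwist_mem hπ hd1, ?_⟩
    have h4 := aux_smul_latTwist_mem hπ hd2
    exact latTwist_mono_exp hπ (by omega) _ h4
  have main : ∀ N : ℤ, -(k₁ : ℤ) ≤ N → ∃ a, a ∈ latTwist (K := K) π N L ∧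
      x - a ∈ latTwist (K := K) π (-N) (dualLattice B L) ∧
      (algebraMap R K π) • (x - a) ∈ lowerMiddle (K := K) π L (dualLattice B L) :=
    Int.le_induction (by simpa using base) step
  obtain ⟨a, ha1, ha2, ha3⟩ := main (max (k₂ : ℤ) (-(k₁ : ℤ))) (le_max_right _ _)
  set N := max (k₂ : ℤ) (-(k₁ : ℤ)) with hNdef
  have hxD : x ∈ latTwist (K := K) π (-N) (dualLattice B L) :=
    latTwist_mono_exp hπ (by rw [hNdef]; omega) _ (mem_latTwist_neg_natCast hπ hk₂)
  have haD : a ∈ latTwist (K := K) π (-N) (dualLattice B L) := by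
    have := Submodule.sub_mem _ hxD ha2
    have heq : x - (x - a) = a := by abel
    rwa [heq] at this
  have hsx : (algebraMap R K π) • x =
      (algebraMap R K π) • (x - a) + (algebraMap R K π) • a := by
    rw [← smul_add]
    congr 1
    abel
  rw [hsx]
  refine Submodule.add_mem _ ha3 ?_
  refine hcomp (N + 1) ⟨aux_smul_latTwist_mem hπ ha1, ?_⟩
  have := aux_smul_latTwist_mem hπ haD
  exact latTwist_mono_exp hπ (by omega) _ this

end AuxG

/-- `m₋(L,L')` has dual lattice `m₊(L,L')`, and it is almost self-dual:
`π·(m₋(L,L'))' ⊆ m₋(L,L') ⊆ (m₋(L,L'))'`. -/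
theorem dual_lowerMiddle (π : R) (hπ : Irreducible π)
    (B : V →ₗ[K] V →ₗ[K] K) (ε : K) (hε : ε = 1 ∨ ε = -1)
    (hsymm : ∀ x y : V, B x y = ε * B y x)
    (hnd : ∀ x : V, (∀ y : V, B x y = 0) → x = 0)
    (L : Submodule R V) (hL : IsLattice K L) :
    dualLattice B (lowerMiddle (K := K) π L (dualLattice B L)) =
        upperMiddle (K := K) π L (dualLattice B L) ∧
    (algebraMap R K π) • dualLattice B (lowerMiddle (K := K) π L (dualLattice B L)) ≤
        lowerMiddle (K := K) π L (dualLattice B L) ∧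
    lowerMiddle (K := K) π L (dualLattice B L) ≤
        dualLattice B (lowerMiddle (K := K) π L (dualLattice B L)) := by
  have hnd' : LinearMap.BilinForm.Nondegenerate B :=
    ⟨hnd, fun y hy => hnd y fun x => by rw [hsymm, hy x, mul_zero]⟩
  refine ⟨le_antisymm (aux_dual_le_upper hπ hnd' hε hsymm hL)
    (aux_upper_le_dual hπ hε hsymm L), ?_, aux_lower_le_dual hπ hε hsymm L⟩
  intro z hz
  obtain ⟨y, hy, rfl⟩ := hz
  exact aux_smul_upper_mem_lower hπ hnd' hL (aux_dual_le_upper hπ hnd' hε hsymm hL hy)
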